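/- There exists a constant C > 0 such that for every m ≥ 3 and every multi-index β = (β₁, β₂, m-1-β₁-β₂) ∈ ℕ₀³ with β₁ ≥ 1, one has ∑_{s=0}^{⌊(β₁-1)/2⌋} ∑_{t=0}^{⌊β₂/2⌋} (β₁+β₂-2s-1-2t choose β₁-2s-1) · (s+t choose s) ≤ C · m · (β₁+β₂ choose β₁). -/

import Mathlib

open Finset

/-- `C(k,s)² ≤ C(2k, 2s)` via Vandermonde. -/
lemma choose_sq_le (k s : ℕ) : k.choose s * k.choose s ≤ (2*k).choose (2*s) := by
  have h : (2*k).choose (2*s) = (k + k).choose (2*s) := by ring_nf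
  rw [h, Nat.add_choose_eq]
  have hmem : (s, s) ∈ Finset.HasAntidiagonal.antidiagonal (2*s) := by
    simp only [Finset.HasAntidiagonal.mem_antidiagonal]; omega
  exact Finset.single_le_sum (f := fun ij : ℕ × ℕ => k.choose ij.1 * k.choose ij.2)
    (fun _ _ => Nat.zero_le _) hmem

/-- `C(k,s) ≤ C(2k+1, 2s+1)`. -/
lemma choose_le_double (k s : ℕ) : k.choose s ≤ (2*k+1).choose (2*s+1) := by
  by_cases hsk : s ≤ k
  · have h1 : (2*k).choose (2*s) ≤ (2*k+1).choose (2*s+1) := by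
      rw [Nat.choose_succ_succ]
      exact Nat.le_add_right _ _
    have h2 : k.choose s * 1 ≤ k.choose s * k.choose s :=
      Nat.mul_le_mul_left _ (Nat.one_le_iff_ne_zero.mpr (Nat.choose_pos hsk).ne')
    calc k.choose s = k.choose s * 1 := (mul_one _).symm
      _ ≤ k.choose s * k.choose s := h2
      _ ≤ (2*k).choose (2*s) := choose_sq_le k s
      _ ≤ (2*k+1).choose (2*s+1) := h1
  · rw [Nat.choose_eq_zero_of_lt (by omega)]
    exact Nat.zero_le _

/-- Vandermonde in the form we need. -/
lemma vandermonde_range (A B r : ℕ) :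
    ∑ j ∈ range (r+1), A.choose (r - j) * B.choose j = (A + B).choose r := by
  rw [add_comm A B, Nat.add_choose_eq,
    Finset.Nat.sum_antidiagonal_eq_sum_range_succ (fun i j => B.choose i * A.choose j) r]
  exact Finset.sum_congr rfl (fun j _ => mul_comm _ _)

theorem stmt5 : ∃ C : ℝ, 0 < C ∧ ∀ m β₁ β₂ : ℕ, 3 ≤ m → 1 ≤ β₁ → β₁ + β₂ + 1 ≤ m →
    (∑ s ∈ range ((β₁ - 1) / 2 + 1), ∑ t ∈ range (β₂ / 2 + 1),
        ((β₁ + β₂ - 2 * s - 1 - 2 * t).choose (β₁ - 2 * s - 1) * (s + t).choose s : ℝ)) ≤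
      C * m * ((β₁ + β₂).choose β₁ : ℝ) := by
  refine ⟨1, one_pos, fun m β₁ β₂ hm hβ₁ hsum => ?_⟩
  set n := β₁ + β₂ with hn
  set K := (β₁ - 1) / 2 + β₂ / 2 with hK
  -- the key inequality in ℕ
  have key : (∑ s ∈ range ((β₁ - 1) / 2 + 1), ∑ t ∈ range (β₂ / 2 + 1),
      (n - 2 * s - 1 - 2 * t).choose (β₁ - 2 * s - 1) * (s + t).choose s)
      ≤ m * n.choose β₁ := by
    set G : (Σ _ : ℕ, ℕ) → ℕ := fun q => (n - 2 * q.1 - 1).choose (β₁ - q.2) * (2 * q.1 + 1).choose q.2 with hG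
    set e : ℕ × ℕ → (Σ _ : ℕ, ℕ) := fun p => ⟨p.1 + p.2, 2 * p.1 + 1⟩ with he
    set rect : Finset (ℕ × ℕ) := range ((β₁ - 1) / 2 + 1) ×ˢ range (β₂ / 2 + 1) with hrect
    have step1 : (∑ s ∈ range ((β₁ - 1) / 2 + 1), ∑ t ∈ range (β₂ / 2 + 1),
        (n - 2 * s - 1 - 2 * t).choose (β₁ - 2 * s - 1) * (s + t).choose s)
        = ∑ p ∈ rect, (n - 2 * p.1 - 1 - 2 * p.2).choose (β₁ - 2 * p.1 - 1) * (p.1 + p.2).choose p.1 := by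
      rw [Finset.sum_product]
    have step2 : ∀ p ∈ rect,
        (n - 2 * p.1 - 1 - 2 * p.2).choose (β₁ - 2 * p.1 - 1) * (p.1 + p.2).choose p.1 ≤ G (e p) := by
      rintro ⟨s, t⟩ _
      have h1 : n - 2 * s - 1 - 2 * t = n - 2 * (s + t) - 1 := by omega
      have h2 : β₁ - 2 * s - 1 = β₁ - (2 * s + 1) := by omega
      simp only [hG, he, h1, h2]
      exact Nat.mul_le_mul_left _ (choose_le_double (s + t) s)
    have einj : ∀ p ∈ rect, ∀ q ∈ rect, e p = e q → p = q := by
      rintro ⟨a, b⟩ _ ⟨c, d⟩ _ h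
      simp only [he, Sigma.mk.inj_iff, heq_eq_eq] at h
      have : a = c ∧ b = d := by omega
      simp [this.1, this.2]
    have step3 : ∑ p ∈ rect, G (e p) = ∑ q ∈ rect.image e, G q := (Finset.sum_image einj).symm
    set tri : Finset (Σ _ : ℕ, ℕ) := (range (K + 1)).sigma (fun k => range (min (2 * k + 2) (β₁ + 1))) with htri
    have hsub : rect.image e ⊆ tri := by
      intro q hq
      simp only [Finset.mem_image] at hq
      obtain ⟨⟨s, t⟩, hp, rfl⟩ := hq
      simp only [hrect, Finset.mem_product, Finset.mem_range] at hp
      simp only [htri, he, Finset.mem_sigma, Finset.mem_range, lt_min_iff]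
      omega
    have step4 : ∑ q ∈ rect.image e, G q ≤ ∑ q ∈ tri, G q :=
      Finset.sum_le_sum_of_subset hsub
    have step5 : ∑ q ∈ tri, G q ≤ ∑ k ∈ range (K + 1), n.choose β₁ := by
      rw [htri, Finset.sum_sigma]
      refine Finset.sum_le_sum (fun k hk => ?_)
      have hsub2 : range (min (2 * k + 2) (β₁ + 1)) ⊆ range (β₁ + 1) :=
        Finset.range_subset_range.mpr (min_le_right _ _)
      have h6 : (∑ j ∈ range (min (2 * k + 2) (β₁ + 1)), G ⟨k, j⟩)
          ≤ ∑ j ∈ range (β₁ + 1), G ⟨k, j⟩ := Finset.sum_le_sum_of_subset hsub2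
      refine h6.trans ?_
      have hkK : k ≤ K := by simp only [Finset.mem_range] at hk; omega
      have h2k : 2 * k + 1 ≤ n := by
        simp only [hK] at hkK; omega
      have hvdm : ∑ j ∈ range (β₁ + 1), G ⟨k, j⟩ = ((n - 2 * k - 1) + (2 * k + 1)).choose β₁ := by
        rw [← vandermonde_range]
      rw [hvdm]
      have : (n - 2 * k - 1) + (2 * k + 1) = n := by omega
      rw [this]
    have step6 : ∑ k ∈ range (K + 1), n.choose β₁ = (K + 1) * n.choose β₁ := by
      rw [Finset.sum_const, Finset.card_range, smul_eq_mul]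
    have hKm : K + 1 ≤ m := by simp only [hK]; omega
    calc (∑ s ∈ range ((β₁ - 1) / 2 + 1), ∑ t ∈ range (β₂ / 2 + 1),
          (n - 2 * s - 1 - 2 * t).choose (β₁ - 2 * s - 1) * (s + t).choose s)
        = ∑ p ∈ rect, (n - 2 * p.1 - 1 - 2 * p.2).choose (β₁ - 2 * p.1 - 1) * (p.1 + p.2).choose p.1 := step1
      _ ≤ ∑ p ∈ rect, G (e p) := Finset.sum_le_sum step2
      _ = ∑ q ∈ rect.image e, G q := step3
      _ ≤ ∑ q ∈ tri, G q := step4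
      _ ≤ ∑ k ∈ range (K + 1), n.choose β₁ := step5
      _ = (K + 1) * n.choose β₁ := step6
      _ ≤ m * n.choose β₁ := Nat.mul_le_mul_right _ hKm
  -- cast to ℝ
  have hcast : (∑ s ∈ range ((β₁ - 1) / 2 + 1), ∑ t ∈ range (β₂ / 2 + 1),
      ((β₁ + β₂ - 2 * s - 1 - 2 * t).choose (β₁ - 2 * s - 1) * (s + t).choose s : ℝ))
      = ((∑ s ∈ range ((β₁ - 1) / 2 + 1), ∑ t ∈ range (β₂ / 2 + 1),
        (n - 2 * s - 1 - 2 * t).choose (β₁ - 2 * s - 1) * (s + t).choose s : ℕ) : ℝ) := by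
    push_cast [hn]
    rfl
  rw [hcast, one_mul]
  have := key
  calc ((∑ s ∈ range ((β₁ - 1) / 2 + 1), ∑ t ∈ range (β₂ / 2 + 1),
        (n - 2 * s - 1 - 2 * t).choose (β₁ - 2 * s - 1) * (s + t).choose s : ℕ) : ℝ)
      ≤ ((m * n.choose β₁ : ℕ) : ℝ) := by exact_mod_cast key
    _ = (m : ℝ) * (n.choose β₁ : ℝ) := by push_cast; ring
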